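/- Let Cyl ⊣ Path be an adjunction of endofunctors of a category K with pushouts, σ : Cyl ⇒ Id a natural transformation, and i an object. Suppose σ is objectwise a retraction admitting compatible data so that for each X, the pushout map p_X : Cyl(X) → Cyl_i(X) (underlying object of the induced coslice cylinder) is a split epimorphism with section s_X. If every map σ_X : Cyl(X) → X has the right lifting property in K with respect to all maps i ⊔ A → i ⊔ B induced by a class I of maps A → B, then the induced map σ^i_X : Cyl_i(X) → X (in the coslice) has the right lifting property with respect to the images ρ^i(f) for f ∈ I. -/

import Mathlib

open CategoryTheory CategoryTheory.Limits

universe v u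

/-- If each `p_X : Cyl(X) ⟶ Cyl_i(X)` is a split epimorphism and every `σ_X` has the
right lifting property with respect to the maps `i ⨿ A ⟶ i ⨿ B` induced by a class `I`,
then the induced map `σ^i_X : Cyl_i(X) ⟶ X` in the coslice category `i↓K` has the right
lifting property with respect to the maps `ρ^i(f)` for `f ∈ I`. -/
theorem coslice_cylinder_rlp
    {K : Type u} [Category.{v} K] [HasPushouts K] [HasBinaryCoproducts K]
    (Cyl Path : K ⥤ K) (adj : Cyl ⊣ Path) (σ : Cyl ⟶ 𝟭 K) (i : K)
    (I : MorphismProperty K)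
    (hsec : ∀ e : Under i, ∃ s : pushout (σ.app i) (Cyl.map e.hom) ⟶ Cyl.obj e.right,
      s ≫ pushout.inr (σ.app i) (Cyl.map e.hom) = 𝟙 _)
    (hrlp : ∀ (X : K) {A B : K} (f : A ⟶ B), I f →
      HasLiftingProperty (coprod.map (𝟙 i) f) (σ.app X)) :
    ∀ (e : Under i) {A B : K} (f : A ⟶ B), I f →
      HasLiftingProperty
        (Under.homMk (coprod.map (𝟙 i) f) (by simp) :
          Under.mk (coprod.inl : i ⟶ i ⨿ A) ⟶ Under.mk (coprod.inl : i ⟶ i ⨿ B))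
        (Under.homMk
            (pushout.desc e.hom (σ.app e.right) (by simpa using (σ.naturality e.hom).symm))
            (by exact pushout.inl_desc _ _ _) :
          Under.mk (pushout.inl (σ.app i) (Cyl.map e.hom)) ⟶ e) := by
  intro e A B f hf
  obtain ⟨s, hs⟩ := hsec e
  have hK := hrlp e.right f hf
  constructor
  intro u v sq
  have hw : u.right ≫ pushout.desc e.hom (σ.app e.right)
      (by simpa using (σ.naturality e.hom).symm) = coprod.map (𝟙 i) f ≫ v.right := by
    have h := congrArg CommaMorphism.right sq.w
    simpa using h
  have sq' : CommSq (u.right ≫ s) (coprod.map (𝟙 i) f) (σ.app e.right) v.right := ⟨by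
    have hcomp : s ≫ σ.app e.right = pushout.desc e.hom (σ.app e.right)
        (by simpa using (σ.naturality e.hom).symm) := by
      calc s ≫ σ.app e.right
          = (s ≫ pushout.inr (σ.app i) (Cyl.map e.hom)) ≫ pushout.desc e.hom (σ.app e.right)
            (by simpa using (σ.naturality e.hom).symm) := by
              rw [Category.assoc]; exact congrArg (s ≫ ·) (pushout.inr_desc _ _ _).symm
        _ = _ := by rw [hs]; simp
    rw [Category.assoc, hcomp, hw]⟩
  have hinl : coprod.inl ≫ u.right = pushout.inl (σ.app i) (Cyl.map e.hom) := Under.w u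
  refine ⟨⟨⟨Under.homMk (sq'.lift ≫ pushout.inr (σ.app i) (Cyl.map e.hom)) ?_, ?_, ?_⟩⟩⟩
  · have h1 : coprod.inl ≫ sq'.lift = coprod.inl ≫ u.right ≫ s := by
      calc coprod.inl ≫ sq'.lift
          = (coprod.inl ≫ coprod.map (𝟙 i) f) ≫ sq'.lift := by simp
        _ = coprod.inl ≫ u.right ≫ s := by rw [Category.assoc, sq'.fac_left]
    show coprod.inl ≫ sq'.lift ≫ pushout.inr (σ.app i) (Cyl.map e.hom) = _
    rw [← Category.assoc, h1, Category.assoc, Category.assoc, hs]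
    simpa using hinl
  · ext
    simp [sq'.fac_left, Category.assoc, hs]
  · ext
    have := sq'.fac_right
    simp [Category.assoc, this]
    exact (congrArg (sq'.lift ≫ ·) (pushout.inr_desc _ _ _)).trans this
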